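/- Let μ₁,₁ⁿ (n > 3) be the complex algebra with basis e₁,…,eₙ and only nonzero products eᵢeⱼ = e_{i+j} for i+j ≤ n−1. Define ∇(∑ xᵢeᵢ) = f(x₁, xₙ)eₙ where f(z₁,zₙ) = z₁²/zₙ if zₙ ≠ 0 and 0 otherwise. Then ∇ is a 2-local derivation of μ₁,₁ⁿ which is not additive, hence not a derivation. -/

import Mathlib

/-- basis vectors -/
noncomputable def e (n : ℕ) (i : Fin n) : Fin n → ℂ := Pi.single i 1

/-- product of the null-filiform algebra μ₀ⁿ (0-based indices: index a ↔ e_{a+1}) -/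
noncomputable def mul0 (n : ℕ) (x y : Fin n → ℂ) : Fin n → ℂ :=
  fun k => ∑ i : Fin n, ∑ j : Fin n,
    if (i : ℕ) + (j : ℕ) + 1 = (k : ℕ) then x i * y j else 0

def IsDer {n : ℕ} (μ : (Fin n → ℂ) → (Fin n → ℂ) → Fin n → ℂ)
    (D : (Fin n → ℂ) →ₗ[ℂ] (Fin n → ℂ)) : Prop :=
  ∀ x y, D (μ x y) = μ (D x) y + μ x (D y)

def IsLocDer {n : ℕ} (μ : (Fin n → ℂ) → (Fin n → ℂ) → Fin n → ℂ)
    (Δ : (Fin n → ℂ) →ₗ[ℂ] (Fin n → ℂ)) : Prop :=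
  ∀ x, ∃ D, IsDer μ D ∧ Δ x = D x

/-- the submodule of derivations, given bilinearity of μ -/
noncomputable def derSubmodule (n : ℕ) (μ : (Fin n → ℂ) → (Fin n → ℂ) → Fin n → ℂ)
    (hal : ∀ x y z, μ (x + y) z = μ x z + μ y z)
    (har : ∀ x y z, μ x (y + z) = μ x y + μ x z)
    (hsl : ∀ (c : ℂ) x y, μ (c • x) y = c • μ x y)
    (hsr : ∀ (c : ℂ) x y, μ x (c • y) = c • μ x y) :
    Submodule ℂ ((Fin n → ℂ) →ₗ[ℂ] (Fin n → ℂ)) where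
  carrier := {D | IsDer μ D}
  zero_mem' := by
    intro x y
    have h1 : μ 0 y = 0 := by simpa using hsl 0 0 y
    have h2 : μ x 0 = 0 := by simpa using hsr 0 x 0
    simp [h1, h2]
  add_mem' := by
    intro D1 D2 h1 h2 x y
    simp only [LinearMap.add_apply, h1 x y, h2 x y, hal, har]
    abel
  smul_mem' := by
    intro c D hD x y
    simp only [LinearMap.smul_apply, hD x y, smul_add, hsl, hsr]

/-- the submodule of local derivations, given bilinearity of μ -/
noncomputable def locDerSubmodule (n : ℕ) (μ : (Fin n → ℂ) → (Fin n → ℂ) → Fin n → ℂ)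
    (hal : ∀ x y z, μ (x + y) z = μ x z + μ y z)
    (har : ∀ x y z, μ x (y + z) = μ x y + μ x z)
    (hsl : ∀ (c : ℂ) x y, μ (c • x) y = c • μ x y)
    (hsr : ∀ (c : ℂ) x y, μ x (c • y) = c • μ x y) :
    Submodule ℂ ((Fin n → ℂ) →ₗ[ℂ] (Fin n → ℂ)) where
  carrier := {Δ | IsLocDer μ Δ}
  zero_mem' := by
    intro x
    exact ⟨0, (derSubmodule n μ hal har hsl hsr).zero_mem, rfl⟩
  add_mem' := by
    intro D1 D2 h1 h2 x
    obtain ⟨E1, hE1, he1⟩ := h1 x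
    obtain ⟨E2, hE2, he2⟩ := h2 x
    exact ⟨E1 + E2, (derSubmodule n μ hal har hsl hsr).add_mem hE1 hE2, by
      simp [he1, he2]⟩
  smul_mem' := by
    intro c Δ hΔ x
    obtain ⟨E, hE, he⟩ := hΔ x
    exact ⟨c • E, (derSubmodule n μ hal har hsl hsr).smul_mem c hE, by simp [he]⟩

lemma mul0_add_left (n : ℕ) (x y z : Fin n → ℂ) :
    mul0 n (x + y) z = mul0 n x z + mul0 n y z := by
  funext k
  simp only [mul0, Pi.add_apply]
  rw [← Finset.sum_add_distrib]
  refine Finset.sum_congr rfl fun i _ => ?_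
  rw [← Finset.sum_add_distrib]
  refine Finset.sum_congr rfl fun j _ => ?_
  split <;> ring

lemma mul0_add_right (n : ℕ) (x y z : Fin n → ℂ) :
    mul0 n x (y + z) = mul0 n x y + mul0 n x z := by
  funext k
  simp only [mul0, Pi.add_apply]
  rw [← Finset.sum_add_distrib]
  refine Finset.sum_congr rfl fun i _ => ?_
  rw [← Finset.sum_add_distrib]
  refine Finset.sum_congr rfl fun j _ => ?_
  split <;> ring

lemma mul0_smul_left (n : ℕ) (c : ℂ) (x y : Fin n → ℂ) :
    mul0 n (c • x) y = c • mul0 n x y := by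
  funext k
  simp only [mul0, Pi.smul_apply, smul_eq_mul, Finset.mul_sum]
  refine Finset.sum_congr rfl fun i _ => ?_
  refine Finset.sum_congr rfl fun j _ => ?_
  split <;> ring

lemma mul0_smul_right (n : ℕ) (c : ℂ) (x y : Fin n → ℂ) :
    mul0 n x (c • y) = c • mul0 n x y := by
  funext k
  simp only [mul0, Pi.smul_apply, smul_eq_mul, Finset.mul_sum]
  refine Finset.sum_congr rfl fun i _ => ?_
  refine Finset.sum_congr rfl fun j _ => ?_
  split <;> ring


noncomputable def mul11 (n : ℕ) (x y : Fin n → ℂ) : Fin n → ℂ :=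
  fun k => ∑ i : Fin n, ∑ j : Fin n,
    if (i : ℕ) + (j : ℕ) + 1 = (k : ℕ) ∧ (k : ℕ) + 2 ≤ n then x i * y j else 0

lemma mul11_add_left (n : ℕ) (x y z : Fin n → ℂ) :
    mul11 n (x + y) z = mul11 n x z + mul11 n y z := by
  funext k
  simp only [mul11, Pi.add_apply]
  rw [← Finset.sum_add_distrib]
  refine Finset.sum_congr rfl fun i _ => ?_
  rw [← Finset.sum_add_distrib]
  refine Finset.sum_congr rfl fun j _ => ?_
  split <;> ring

lemma mul11_add_right (n : ℕ) (x y z : Fin n → ℂ) :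
    mul11 n x (y + z) = mul11 n x y + mul11 n x z := by
  funext k
  simp only [mul11, Pi.add_apply]
  rw [← Finset.sum_add_distrib]
  refine Finset.sum_congr rfl fun i _ => ?_
  rw [← Finset.sum_add_distrib]
  refine Finset.sum_congr rfl fun j _ => ?_
  split <;> ring

lemma mul11_smul_left (n : ℕ) (c : ℂ) (x y : Fin n → ℂ) :
    mul11 n (c • x) y = c • mul11 n x y := by
  funext k
  simp only [mul11, Pi.smul_apply, smul_eq_mul, Finset.mul_sum]
  refine Finset.sum_congr rfl fun i _ => ?_
  refine Finset.sum_congr rfl fun j _ => ?_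
  split <;> ring

lemma mul11_smul_right (n : ℕ) (c : ℂ) (x y : Fin n → ℂ) :
    mul11 n x (c • y) = c • mul11 n x y := by
  funext k
  simp only [mul11, Pi.smul_apply, smul_eq_mul, Finset.mul_sum]
  refine Finset.sum_congr rfl fun i _ => ?_
  refine Finset.sum_congr rfl fun j _ => ?_
  split <;> ring

noncomputable def f17 : ℂ → ℂ → ℂ := fun z1 zn => if zn ≠ 0 then z1 ^ 2 / zn else 0

noncomputable def nabla17 (n : ℕ) (hn : 0 < n) : (Fin n → ℂ) → (Fin n → ℂ) :=
  fun x => f17 (x ⟨0, hn⟩) (x ⟨n - 1, by omega⟩) • e n ⟨n - 1, by omega⟩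


lemma mul11_apply_zero {n : ℕ} (x y : Fin n → ℂ) (k : Fin n)
    (hk : (k : ℕ) = 0 ∨ n ≤ (k : ℕ) + 1) : mul11 n x y k = 0 := by
  unfold mul11
  refine Finset.sum_eq_zero fun i _ => Finset.sum_eq_zero fun j _ => ?_
  rw [if_neg]; rintro ⟨h1, h2⟩; omega

lemma mul11_e_left {n : ℕ} (hn : 0 < n) (c : ℂ) (y : Fin n → ℂ) :
    mul11 n (c • e n ⟨n - 1, by omega⟩) y = 0 := by
  funext k
  unfold mul11 e
  refine Finset.sum_eq_zero fun i _ => Finset.sum_eq_zero fun j _ => ?_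
  by_cases hi : i = ⟨n - 1, by omega⟩
  · subst hi
    split
    · next h => exfalso; obtain ⟨h1, h2⟩ := h; simp only [Fin.val_mk] at h1; omega
    · rfl
  · simp [Pi.single_eq_of_ne hi]

lemma mul11_e_right {n : ℕ} (hn : 0 < n) (c : ℂ) (x : Fin n → ℂ) :
    mul11 n x (c • e n ⟨n - 1, by omega⟩) = 0 := by
  funext k
  unfold mul11 e
  refine Finset.sum_eq_zero fun i _ => Finset.sum_eq_zero fun j _ => ?_
  by_cases hj : j = ⟨n - 1, by omega⟩
  · subst hj
    split
    · next h => exfalso; obtain ⟨h1, h2⟩ := h; simp only [Fin.val_mk] at h1; omega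
    · rfl
  · simp [Pi.single_eq_of_ne hj]

noncomputable def Dab (n : ℕ) (hn : 3 < n) (α β : ℂ) : (Fin n → ℂ) →ₗ[ℂ] (Fin n → ℂ) where
  toFun x := (α * x ⟨0, Nat.zero_lt_of_lt hn⟩ + β * x ⟨n - 1, by omega⟩) • e n ⟨n - 1, by omega⟩
  map_add' x y := by
    simp only [Pi.add_apply]
    rw [← add_smul]; congr 1; ring
  map_smul' c x := by
    simp only [Pi.smul_apply, RingHom.id_apply, smul_eq_mul, smul_smul]
    congr 1; ring

lemma Dab_isDer (n : ℕ) (hn : 3 < n) (α β : ℂ) : IsDer (mul11 n) (Dab n hn α β) := by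
  intro x y
  have h0 : mul11 n x y ⟨0, Nat.zero_lt_of_lt hn⟩ = 0 := mul11_apply_zero x y _ (Or.inl rfl)
  have h1 : mul11 n x y ⟨n - 1, by omega⟩ = 0 := mul11_apply_zero x y _ (Or.inr (by simp; omega))
  show (α * mul11 n x y ⟨0, Nat.zero_lt_of_lt hn⟩ + β * mul11 n x y ⟨n - 1, by omega⟩) • e n ⟨n - 1, by omega⟩
      = mul11 n ((α * x ⟨0, Nat.zero_lt_of_lt hn⟩ + β * x ⟨n - 1, by omega⟩) • e n ⟨n - 1, by omega⟩) y
        + mul11 n x ((α * y ⟨0, Nat.zero_lt_of_lt hn⟩ + β * y ⟨n - 1, by omega⟩) • e n ⟨n - 1, by omega⟩)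
  rw [h0, h1, mul11_e_left (by omega), mul11_e_right (by omega)]
  simp

lemma solve17 (a1 a2 b1 b2 : ℂ) :
    ∃ α β : ℂ, α * a1 + β * a2 = f17 a1 a2 ∧ α * b1 + β * b2 = f17 b1 b2 := by
  unfold f17
  by_cases ha : a2 = 0
  · by_cases hb : b2 = 0
    · exact ⟨0, 0, by simp [ha, hb]⟩
    · refine ⟨0, b1 ^ 2 / b2 ^ 2, ?_, ?_⟩
      · simp [ha]
      · simp [hb]; field_simp
  · by_cases hb : b2 = 0
    · refine ⟨0, a1 ^ 2 / a2 ^ 2, ?_, ?_⟩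
      · simp [ha]; field_simp
      · simp [hb]
    · by_cases hd : a1 * b2 - a2 * b1 = 0
      · refine ⟨a1 / a2, 0, ?_, ?_⟩
        · simp [ha]; field_simp
        · simp [hb]; field_simp; linear_combination b1 * hd
      · refine ⟨((a1 ^ 2 / a2) * b2 - (b1 ^ 2 / b2) * a2) / (a1 * b2 - a2 * b1),
          (a1 * (b1 ^ 2 / b2) - b1 * (a1 ^ 2 / a2)) / (a1 * b2 - a2 * b1), ?_, ?_⟩
        · simp [ha]; field_simp; ring
        · simp [hb]; field_simp; ring

theorem stmt17 (n : ℕ) (hn : 3 < n) :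
    (∀ x y : Fin n → ℂ, ∃ D : (Fin n → ℂ) →ₗ[ℂ] (Fin n → ℂ),
      IsDer (mul11 n) D ∧
        nabla17 n (by omega) x = D x ∧ nabla17 n (by omega) y = D y) ∧
    ¬ (∀ u v : Fin n → ℂ,
        nabla17 n (by omega) (u + v) = nabla17 n (by omega) u + nabla17 n (by omega) v) := by
  constructor
  · intro x y
    obtain ⟨α, β, h1, h2⟩ := solve17 (x ⟨0, by omega⟩) (x ⟨n - 1, by omega⟩)
      (y ⟨0, by omega⟩) (y ⟨n - 1, by omega⟩)
    refine ⟨Dab n hn α β, Dab_isDer n hn α β, ?_, ?_⟩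
    · show nabla17 n (by omega) x
        = (α * x ⟨0, by omega⟩ + β * x ⟨n - 1, by omega⟩) • e n ⟨n - 1, by omega⟩
      rw [h1]; rfl
    · show nabla17 n (by omega) y
        = (α * y ⟨0, by omega⟩ + β * y ⟨n - 1, by omega⟩) • e n ⟨n - 1, by omega⟩
      rw [h2]; rfl
  · intro h
    have h0 : (⟨0, by omega⟩ : Fin n) ≠ ⟨n - 1, by omega⟩ := by
      intro hc
      have := congrArg Fin.val hc
      simp at this; omega
    have := congrFun (h (e n ⟨0, by omega⟩) (e n ⟨n - 1, by omega⟩)) ⟨n - 1, by omega⟩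
    simp only [nabla17, e, Pi.add_apply, Pi.smul_apply, Pi.single_eq_same,
      Pi.single_eq_of_ne h0, Pi.single_eq_of_ne (Ne.symm h0), smul_eq_mul] at this
    norm_num [f17] at this
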